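/- Zippable functors on Set are closed under binary coproducts: if F and G are zippable, then so is the functor H with HX = FX + GX (disjoint union). -/

import Mathlib

open CategoryTheory

/-- A set functor is zippable if `⟨F(X+!), F(!+Y)⟩ : F(X+Y) → F(X+1) × F(1+Y)`
is injective for all `X, Y`. -/
def Zippable (F : Type u ⥤ Type u) : Prop :=
  ∀ X Y : Type u,
    Function.Injective (fun t : F.obj (X ⊕ Y) =>
      (F.map (TypeCat.ofHom (Sum.map (id : X → X) (fun _ : Y => PUnit.unit))) t,
       F.map (TypeCat.ofHom (Sum.map (fun _ : X => PUnit.unit) (id : Y → Y))) t))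

/-- The pointwise coproduct (disjoint union) of two set functors. -/
def coprodFunctor (F G : Type u ⥤ Type u) : Type u ⥤ Type u where
  obj X := F.obj X ⊕ G.obj X
  map f := TypeCat.ofHom (Sum.map (F.map f) (G.map f))
  map_id := by
    intro X; ext p; cases p <;> simp
  map_comp := by
    intro X Y Z f g; ext p; cases p <;> simp

/-- Zippable functors are closed under binary coproducts. -/
theorem zippable_coprod (F G : Type u ⥤ Type u) (hF : Zippable F) (hG : Zippable G) :
    Zippable (coprodFunctor F G) := by
  intro X Y a b h
  change (Sum.map (F.map (TypeCat.ofHom (Sum.map (id : X → X) (fun _ : Y => PUnit.unit))))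
      (G.map (TypeCat.ofHom (Sum.map (id : X → X) (fun _ : Y => PUnit.unit)))) a,
    Sum.map (F.map (TypeCat.ofHom (Sum.map (fun _ : X => PUnit.unit) (id : Y → Y))))
      (G.map (TypeCat.ofHom (Sum.map (fun _ : X => PUnit.unit) (id : Y → Y)))) a) =
    (Sum.map (F.map (TypeCat.ofHom (Sum.map (id : X → X) (fun _ : Y => PUnit.unit))))
      (G.map (TypeCat.ofHom (Sum.map (id : X → X) (fun _ : Y => PUnit.unit)))) b,
    Sum.map (F.map (TypeCat.ofHom (Sum.map (fun _ : X => PUnit.unit) (id : Y → Y))))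
      (G.map (TypeCat.ofHom (Sum.map (fun _ : X => PUnit.unit) (id : Y → Y)))) b) at h
  simp only [Prod.mk.injEq] at h
  obtain ⟨h1, h2⟩ := h
  cases a <;> cases b <;> simp [Sum.map] at h1 h2 ⊢
  · exact congrArg Sum.inl (hF X Y (Prod.ext h1 h2))
  · exact congrArg Sum.inr (hG X Y (Prod.ext h1 h2))
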